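/- Let 𝔸 = (A, ≤, →, Σ) be an implicative algebra with |A| < κ for a strongly inaccessible cardinal κ, and let W, ∈_W, =_W and the interpretation ‖·‖ be as defined below. Then W validates the Empty-set axiom: ‖∃x ∀y(y ∈ x → ⊥)‖ ∈ Σ. -/

import Mathlib

universe u

/-- An implicative algebra `𝔸 = (A, ≤, →, Σ)`:  a complete lattice `(A, ≤)` together with an
implication `imp` which is antitone in its first argument, monotone in its second argument and
turns infima in the second argument into infima, and a separator `Sig ⊆ A` which is upward
closed, closed under modus ponens and contains the combinators `K` and `S`. -/
structure ImplicativeAlgebra (A : Type u) [CompleteLattice A] where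
  imp : A → A → A
  imp_antitone : ∀ ⦃a a' b : A⦄, a ≤ a' → imp a' b ≤ imp a b
  imp_monotone : ∀ ⦃a b b' : A⦄, b ≤ b' → imp a b ≤ imp a b'
  imp_sInf : ∀ (a : A) (S : Set A), imp a (sInf S) = ⨅ b ∈ S, imp a b
  Sig : Set A
  Sig_upward : ∀ ⦃a b : A⦄, a ∈ Sig → a ≤ b → b ∈ Sig
  Sig_mp : ∀ ⦃a b : A⦄, imp a b ∈ Sig → a ∈ Sig → b ∈ Sig
  Sig_K : (⨅ a : A, ⨅ b : A, imp a (imp b a)) ∈ Sig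
  Sig_S : (⨅ a : A, ⨅ b : A, ⨅ c : A,
      imp (imp a (imp b c)) (imp (imp a b) (imp a c))) ∈ Sig

namespace ImplicativeAlgebra

variable {A : Type u} [CompleteLattice A]

/-- `a × b := ⨅ x, ((a → (b → x)) → x)`. -/
def times (IA : ImplicativeAlgebra A) (a b : A) : A :=
  ⨅ x : A, IA.imp (IA.imp a (IA.imp b x)) x

/-- `a + b := ⨅ x, ((a → x) → ((b → x) → x))`. -/
def plus (IA : ImplicativeAlgebra A) (a b : A) : A :=
  ⨅ x : A, IA.imp (IA.imp a x) (IA.imp (IA.imp b x) x)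

/-- `∃⃗_{i} f i := ⨅ x, ((⨅ i, (f i → x)) → x)`.  (`∀⃗` is just `⨅`.) -/
def aex (IA : ImplicativeAlgebra A) {ι : Sort*} (f : ι → A) : A :=
  ⨅ x : A, IA.imp (⨅ i, IA.imp (f i) x) x

/-- `φ ⊢_{Σ[I]} ψ` iff `⨅ i, (φ i → ψ i) ∈ Σ`. -/
def SigLe (IA : ImplicativeAlgebra A) {ι : Sort*} (f g : ι → A) : Prop :=
  (⨅ i, IA.imp (f i) (g i)) ∈ IA.Sig

/-- `φ ≡_{Σ[I]} ψ` iff `φ ⊢_{Σ[I]} ψ` and `ψ ⊢_{Σ[I]} φ`. -/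
def SigEquiv (IA : ImplicativeAlgebra A) {ι : Sort*} (f g : ι → A) : Prop :=
  IA.SigLe f g ∧ IA.SigLe g f

end ImplicativeAlgebra

/-- Pre-elements of the cumulative hierarchy of partial functions valued in `A`:
an element is an `A`-labelled family of previously constructed elements, i.e. a partial
function (presented by a family indexed by its domain) from earlier elements to `A`. -/
inductive PreW (A : Type u) : Type (u + 1)
  | mk (ι : Type u) (fam : ι → PreW A) (val : ι → A)

namespace PreW

variable {A : Type u}

/-- The (index type of the) domain of a partial function. -/
def dom : PreW A → Type u
  | ⟨ι, _, _⟩ => ι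

/-- The family of elements of the domain. -/
def fam : (w : PreW A) → w.dom → PreW A
  | ⟨_, f, _⟩ => f

/-- The values in `A` of the partial function. -/
def val : (w : PreW A) → w.dom → A
  | ⟨_, _, v⟩ => v

/-- `w` is hereditarily of size `< κ`:  this carves out exactly the elements of the stage
`W_κ` of the hierarchy (for `κ` inaccessible). -/
def HSmall (κ : Cardinal.{u}) : PreW A → Prop
  | ⟨ι, f, _⟩ => Cardinal.mk ι < κ ∧ ∀ i, HSmall κ (f i)

theorem HSmall.fam {κ : Cardinal.{u}} :
    ∀ {w : PreW A}, w.HSmall κ → ∀ i : w.dom, (w.fam i).HSmall κ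
  | ⟨_, _, _⟩, h, i => h.2 i

/-- The rank of an element of the hierarchy. -/
noncomputable def rank : PreW A → Ordinal.{u}
  | ⟨_, f, _⟩ => ⨆ i, Order.succ (rank (f i))

theorem rank_lt_mk {ι : Type u} (f : ι → PreW A) (v : ι → A) (i : ι) :
    (f i).rank < (PreW.mk ι f v).rank := by
  have h : Order.succ (f i).rank ≤ ⨆ j, Order.succ (f j).rank := Ordinal.le_iSup _ i
  have : (f i).rank < ⨆ j, Order.succ (f j).rank :=
    lt_of_lt_of_le (Order.lt_succ _) h
  simpa [rank] using this

end PreW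

namespace ImplicativeAlgebra

variable {A : Type u} [CompleteLattice A]

/-- `α =_W β`, defined by recursion on rank:
`α =_W β := (α ⊆_W β) × (β ⊆_W α)` where
`α ⊆_W β := ∀⃗_{t ∈ dom α} (α t → (fam α t ∈_W β))` and
`γ ∈_W β := ∃⃗_{s ∈ dom β} (β s × (fam β s =_W γ))`. -/
noncomputable def eqW (IA : ImplicativeAlgebra A) : PreW A → PreW A → A
  | ⟨ι₁, f₁, v₁⟩, ⟨ι₂, f₂, v₂⟩ =>
    IA.times
      (⨅ t : ι₁, IA.imp (v₁ t)
        (IA.aex fun s : ι₂ => IA.times (v₂ s) (IA.eqW (f₂ s) (f₁ t))))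
      (⨅ t : ι₂, IA.imp (v₂ t)
        (IA.aex fun s : ι₁ => IA.times (v₁ s) (IA.eqW (f₁ s) (f₂ t))))
termination_by α β => max α.rank β.rank
decreasing_by
  · exact max_lt (lt_of_lt_of_le (PreW.rank_lt_mk f₂ v₂ s) (le_max_right _ _))
      (lt_of_lt_of_le (PreW.rank_lt_mk f₁ v₁ t) (le_max_left _ _))
  · exact max_lt (lt_of_lt_of_le (PreW.rank_lt_mk f₁ v₁ s) (le_max_left _ _))
      (lt_of_lt_of_le (PreW.rank_lt_mk f₂ v₂ t) (le_max_right _ _))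

/-- `α ∈_W β := ∃⃗_{s ∈ dom β} (β s × (fam β s =_W α))`. -/
noncomputable def memW (IA : ImplicativeAlgebra A) (α β : PreW A) : A :=
  IA.aex fun s : β.dom => IA.times (β.val s) (IA.eqW (β.fam s) α)

/-- `α ⊆_W β := ∀⃗_{t ∈ dom α} (α t → (fam α t ∈_W β))`. -/
noncomputable def subW (IA : ImplicativeAlgebra A) (α β : PreW A) : A :=
  ⨅ t : α.dom, IA.imp (α.val t) (IA.memW (α.fam t) β)

end ImplicativeAlgebra

/-- The stage `W = W_κ` of the hierarchy: all hereditarily `< κ`-sized elements. -/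
def WSet (A : Type u) (κ : Cardinal.{u}) : Type (u + 1) :=
  {w : PreW A // w.HSmall κ}

/-- An element of the domain of `w ∈ W`, as an element of `W`. -/
def WSet.fam {A : Type u} {κ : Cardinal.{u}} (w : WSet A κ) (i : w.1.dom) : WSet A κ :=
  ⟨w.1.fam i, w.2.fam i⟩

/-- Formulas (in context of length `n`) of the first-order language of set theory, with
(de Bruijn-style) variables `Fin n`, binary predicates `∈` and `=`, connectives `⊥`, `∧`, `∨`,
`→` and quantifiers `∃`, `∀` (binding the last variable of the enlarged context). -/
inductive SetFormula : ℕ → Type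
  | bot {n : ℕ} : SetFormula n
  | mem {n : ℕ} (i j : Fin n) : SetFormula n
  | eq {n : ℕ} (i j : Fin n) : SetFormula n
  | and {n : ℕ} (φ ψ : SetFormula n) : SetFormula n
  | or {n : ℕ} (φ ψ : SetFormula n) : SetFormula n
  | imp {n : ℕ} (φ ψ : SetFormula n) : SetFormula n
  | ex {n : ℕ} (φ : SetFormula (n + 1)) : SetFormula n
  | all {n : ℕ} (φ : SetFormula (n + 1)) : SetFormula n

namespace SetFormula

/-- Renaming of variables (since the only terms of the language of set theory are variables,
substitution is a special case). -/
def rename : {n m : ℕ} → (Fin n → Fin m) → SetFormula n → SetFormula m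
  | _, _, _, .bot => .bot
  | _, _, f, .mem i j => .mem (f i) (f j)
  | _, _, f, .eq i j => .eq (f i) (f j)
  | _, _, f, .and φ ψ => .and (φ.rename f) (ψ.rename f)
  | _, _, f, .or φ ψ => .or (φ.rename f) (ψ.rename f)
  | _, _, f, .imp φ ψ => .imp (φ.rename f) (ψ.rename f)
  | _, _, f, .ex φ => .ex (φ.rename (Fin.snoc (Fin.castSucc ∘ f) (Fin.last _)))
  | _, _, f, .all φ => .all (φ.rename (Fin.snoc (Fin.castSucc ∘ f) (Fin.last _)))

/-- Universal closure `∀x₁ … ∀xₙ φ` of a formula in context of length `n`. -/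
def allClose : {n : ℕ} → SetFormula n → SetFormula 0
  | 0, φ => φ
  | _ + 1, φ => allClose (.all φ)

end SetFormula

namespace ImplicativeAlgebra

variable {A : Type u} [CompleteLattice A]

/-- The interpretation `‖φ[x₁,…,xₙ]‖ : Wⁿ → A` of a formula in context, by recursion on the
structure of `φ`:  atomic formulas are interpreted by `∈_W` and `=_W`, `∧` by `×`, `∨` by `+`,
`→` by `→`, `∃` by `∃⃗` over `W` and `∀` by `∀⃗` (i.e. `⨅`) over `W`. -/
noncomputable def interp (IA : ImplicativeAlgebra A) (κ : Cardinal.{u}) :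
    {n : ℕ} → SetFormula n → (Fin n → WSet A κ) → A
  | _, .bot, _ => ⊥
  | _, .mem i j, v => IA.memW (v i).1 (v j).1
  | _, .eq i j, v => IA.eqW (v i).1 (v j).1
  | _, .and φ ψ, v => IA.times (IA.interp κ φ v) (IA.interp κ ψ v)
  | _, .or φ ψ, v => IA.plus (IA.interp κ φ v) (IA.interp κ ψ v)
  | _, .imp φ ψ, v => IA.imp (IA.interp κ φ v) (IA.interp κ ψ v)
  | _, .ex φ, v => IA.aex fun β : WSet A κ => IA.interp κ φ (Fin.snoc v β)
  | _, .all φ, v => ⨅ β : WSet A κ, IA.interp κ φ (Fin.snoc v β)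

end ImplicativeAlgebra

section Aux

namespace ImplicativeAlgebra

variable {A : Type u} [CompleteLattice A] (IA : ImplicativeAlgebra A)

/-- Application in an implicative algebra. -/
def app (a b : A) : A := sInf {x | a ≤ IA.imp b x}

lemma le_imp_app (a b : A) : a ≤ IA.imp b (IA.app a b) := by
  rw [app, IA.imp_sInf]
  exact le_iInf fun x => le_iInf fun hx => hx

lemma app_le {a b c : A} (h : a ≤ IA.imp b c) : IA.app a b ≤ c := sInf_le h

lemma app_mono {a a' b b' : A} (ha : a ≤ a') (hb : b ≤ b') :
    IA.app a b ≤ IA.app a' b' :=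
  IA.app_le (ha.trans ((IA.le_imp_app a' b').trans (IA.imp_antitone hb)))

lemma app_mem {a b : A} (ha : a ∈ IA.Sig) (hb : b ∈ IA.Sig) : IA.app a b ∈ IA.Sig :=
  IA.Sig_mp (IA.Sig_upward ha (IA.le_imp_app a b)) hb

/-- The combinator `K`. -/
def Kc : A := ⨅ a : A, ⨅ b : A, IA.imp a (IA.imp b a)

/-- The combinator `S`. -/
def Sc : A := ⨅ a : A, ⨅ b : A, ⨅ c : A,
  IA.imp (IA.imp a (IA.imp b c)) (IA.imp (IA.imp a b) (IA.imp a c))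

lemma Kc_mem : IA.Kc ∈ IA.Sig := IA.Sig_K
lemma Sc_mem : IA.Sc ∈ IA.Sig := IA.Sig_S

lemma Kc_le (a b : A) : IA.Kc ≤ IA.imp a (IA.imp b a) :=
  (iInf_le _ a).trans (iInf_le _ b)

lemma Sc_le (a b c : A) : IA.Sc ≤
    IA.imp (IA.imp a (IA.imp b c)) (IA.imp (IA.imp a b) (IA.imp a c)) :=
  ((iInf_le _ a).trans (iInf_le _ b)).trans (iInf_le _ c)

lemma app_Kc_le (a b : A) : IA.app (IA.app IA.Kc a) b ≤ a :=
  IA.app_le (IA.app_le (IA.Kc_le a b))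

lemma app_Sc_le (a b c : A) :
    IA.app (IA.app (IA.app IA.Sc a) b) c ≤ IA.app (IA.app a c) (IA.app b c) := by
  set X := IA.app (IA.app a c) (IA.app b c) with hX
  have h1 : IA.app a c ≤ IA.imp (IA.app b c) X := IA.le_imp_app _ _
  have h2 : a ≤ IA.imp c (IA.imp (IA.app b c) X) :=
    (IA.le_imp_app a c).trans (IA.imp_monotone h1)
  have hS : IA.Sc ≤ IA.imp a (IA.imp (IA.imp c (IA.app b c)) (IA.imp c X)) :=
    (IA.Sc_le c (IA.app b c) X).trans (IA.imp_antitone h2)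
  have h3 : IA.app IA.Sc a ≤ IA.imp b (IA.imp c X) :=
    (IA.app_le hS).trans (IA.imp_antitone (IA.le_imp_app b c))
  exact IA.app_le (IA.app_le h3)

/-- The identity combinator `I = S K K`. -/
def Ic : A := IA.app (IA.app IA.Sc IA.Kc) IA.Kc

lemma Ic_mem : IA.Ic ∈ IA.Sig :=
  IA.app_mem (IA.app_mem IA.Sc_mem IA.Kc_mem) IA.Kc_mem

lemma app_Ic_le (a : A) : IA.app IA.Ic a ≤ a :=
  (IA.app_Sc_le IA.Kc IA.Kc a).trans (IA.app_Kc_le a (IA.app IA.Kc a))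

/-- Existence introduction: if some instance of the family is in the separator, so is the
existential. -/
lemma aex_mem {ι : Sort*} (f : ι → A) (i₀ : ι) (h : f i₀ ∈ IA.Sig) :
    IA.aex f ∈ IA.Sig := by
  set c := f i₀ with hc
  set D := IA.app (IA.app IA.Sc IA.Ic) (IA.app IA.Kc c) with hD
  have hDmem : D ∈ IA.Sig :=
    IA.app_mem (IA.app_mem IA.Sc_mem IA.Ic_mem) (IA.app_mem IA.Kc_mem h)
  refine IA.Sig_upward hDmem (le_iInf fun x => ?_)
  set k := ⨅ i, IA.imp (f i) x with hk
  have happ : IA.app D k ≤ x := by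
    have h1 : IA.app D k ≤ IA.app (IA.app IA.Ic k) (IA.app (IA.app IA.Kc c) k) :=
      IA.app_Sc_le _ _ _
    have h2 : IA.app (IA.app IA.Ic k) (IA.app (IA.app IA.Kc c) k) ≤ IA.app k c :=
      IA.app_mono (IA.app_Ic_le k) (IA.app_Kc_le c k)
    have h3 : IA.app k c ≤ x := IA.app_le (iInf_le _ i₀)
    exact (h1.trans h2).trans h3
  exact (IA.le_imp_app D k).trans (IA.imp_monotone happ)

end ImplicativeAlgebra

end Aux

theorem stmt11 {A : Type u} [CompleteLattice A] (IA : ImplicativeAlgebra A)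
    (κ : Cardinal.{u}) (hκ : κ.IsInaccessible) (hA : Cardinal.mk A < κ) :
    IA.interp κ
      (SetFormula.ex (SetFormula.all ((SetFormula.mem 1 0).imp SetFormula.bot)))
      (fun i => i.elim0) ∈ IA.Sig := by
  -- the empty set
  let w0 : WSet A κ := ⟨⟨PEmpty, PEmpty.elim, PEmpty.elim⟩,
    by
      refine ⟨?_, fun i => i.elim⟩
      simpa using (Cardinal.aleph0_pos.trans hκ.1)⟩
  have hgoal : IA.interp κ
      (SetFormula.ex (SetFormula.all ((SetFormula.mem 1 0).imp SetFormula.bot)))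
      (fun i => i.elim0)
      = IA.aex (fun β : WSet A κ =>
          ⨅ γ : WSet A κ, IA.imp (IA.memW γ.1 β.1) ⊥) := by
    simp only [ImplicativeAlgebra.interp, Fin.snoc, Fin.isValue]
    norm_num
  rw [hgoal]
  refine IA.aex_mem _ w0 ?_
  set e := IA.app (IA.app IA.Sc IA.Ic) IA.Ic with he
  have hemem : e ∈ IA.Sig := IA.app_mem (IA.app_mem IA.Sc_mem IA.Ic_mem) IA.Ic_mem
  refine IA.Sig_upward hemem (le_iInf fun γ => ?_)
  have hmem : IA.memW γ.1 w0.1 ≤ IA.imp ⊤ ⊥ := by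
    unfold ImplicativeAlgebra.memW ImplicativeAlgebra.aex
    refine (iInf_le _ ⊥).trans (IA.imp_antitone (le_iInf fun s => ?_))
    exact (s : PEmpty.{u+1}).elim
  have hstep : IA.imp (IA.imp ⊤ ⊥) ⊥ ≤ IA.imp (IA.memW γ.1 w0.1) ⊥ := IA.imp_antitone hmem
  refine le_trans ?_ hstep
  have hk : IA.app e (IA.imp ⊤ ⊥) ≤ ⊥ := by
    have h1 : IA.app e (IA.imp ⊤ ⊥) ≤ IA.app (IA.imp ⊤ ⊥) (IA.imp ⊤ ⊥) :=
      (IA.app_Sc_le _ _ _).trans (IA.app_mono (IA.app_Ic_le _) (IA.app_Ic_le _))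
    exact h1.trans (IA.app_le (IA.imp_antitone le_top))
  exact (IA.le_imp_app e (IA.imp ⊤ ⊥)).trans (IA.imp_monotone hk)
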